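/- Let b = (b_j)_{j≥1} be a sequence of non-negative reals, and let (𝔸_ν) and (𝔹_ν), indexed by finitely supported multi-indices ν, be non-negative numbers satisfying 𝔸_ν ≤ ∑_{j ∈ supp(ν)} ν_j · b_j · 𝔸_{ν − e_j} + 𝔹_ν for every finitely supported multi-index ν (including ν = 0). Then for all finitely supported ν, 𝔸_ν ≤ ∑_{m ≤ ν} C(ν, m) · |m|! · b^m · 𝔹_{ν − m}, where b^m = ∏_j b_j^{m_j}. -/

import Mathlib

open Finset

lemma aux_sum_sub (ν : ℕ →₀ ℕ) (j : ℕ) (h : 1 ≤ ν j) :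
    ((ν - Finsupp.single j 1).sum fun _ n => n) + 1 = ν.sum fun _ n => n := by
  have hle : Finsupp.single j 1 ≤ ν := Finsupp.single_le_iff.2 h
  conv_rhs => rw [← tsub_add_cancel_of_le hle]
  rw [Finsupp.sum_add_index' (fun _ => rfl) (fun _ _ _ => rfl),
    Finsupp.sum_single_index rfl]

lemma aux_sum_pos (m : ℕ →₀ ℕ) (hm : m ≠ 0) : 0 < m.sum fun _ n => n := by
  obtain ⟨j, hj⟩ := Finsupp.support_nonempty_iff.2 hm
  have : 1 ≤ m j := Nat.one_le_iff_ne_zero.2 (Finsupp.mem_support_iff.1 hj)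
  calc 0 < 1 := one_pos
    _ ≤ (m - Finsupp.single j 1).sum (fun _ n => n) + 1 := le_add_self
    _ = _ := aux_sum_sub m j this

lemma aux_choose_prod (ν m : ℕ →₀ ℕ) (hm : m ≤ ν) (j : ℕ) (hj : j ∈ m.support) :
    ν j * ∏ k ∈ (ν - Finsupp.single j 1).support,
        ((ν - Finsupp.single j 1 : ℕ →₀ ℕ) k).choose ((m - Finsupp.single j 1 : ℕ →₀ ℕ) k)
      = m j * ∏ k ∈ ν.support, (ν k).choose (m k) := by
  have hmj : 1 ≤ m j := Nat.one_le_iff_ne_zero.2 (Finsupp.mem_support_iff.1 hj)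
  have hνj : 1 ≤ ν j := hmj.trans (hm j)
  have hjν : j ∈ ν.support := Finsupp.mem_support_iff.2 (by omega)
  have hext : ∏ k ∈ (ν - Finsupp.single j 1).support,
      ((ν - Finsupp.single j 1 : ℕ →₀ ℕ) k).choose ((m - Finsupp.single j 1 : ℕ →₀ ℕ) k)
      = ∏ k ∈ ν.support, ((ν - Finsupp.single j 1 : ℕ →₀ ℕ) k).choose ((m - Finsupp.single j 1 : ℕ →₀ ℕ) k) := by
    refine Finset.prod_subset Finsupp.support_tsub (fun k hk hk' => ?_)
    have h0 : (ν - Finsupp.single j 1 : ℕ →₀ ℕ) k = 0 := by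
      simpa using Finsupp.notMem_support_iff.1 hk'
    have h1 : (m - Finsupp.single j 1 : ℕ →₀ ℕ) k = 0 := by
      rw [Finsupp.tsub_apply] at h0 ⊢
      have := hm k
      omega
    simp [h0, h1]
  rw [hext, ← Finset.mul_prod_erase _ _ hjν,
    ← Finset.mul_prod_erase _ (fun k => (ν k).choose (m k)) hjν]
  have heq : ∀ k ∈ ν.support.erase j,
      ((ν - Finsupp.single j 1 : ℕ →₀ ℕ) k).choose ((m - Finsupp.single j 1 : ℕ →₀ ℕ) k) = (ν k).choose (m k) := by
    intro k hk
    have hkj : k ≠ j := Finset.ne_of_mem_erase hk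
    simp [Finsupp.tsub_apply, Finsupp.single_apply, (Ne.symm hkj)]
  rw [Finset.prod_congr rfl heq]
  have hdiag : ν j * ((ν - Finsupp.single j 1 : ℕ →₀ ℕ) j).choose ((m - Finsupp.single j 1 : ℕ →₀ ℕ) j)
      = m j * (ν j).choose (m j) := by
    simp only [Finsupp.tsub_apply, Finsupp.single_apply, if_pos rfl]
    obtain ⟨n, hn⟩ : ∃ n, ν j = n + 1 := ⟨ν j - 1, by omega⟩
    obtain ⟨k, hk⟩ : ∃ k, m j = k + 1 := ⟨m j - 1, by omega⟩
    simp only [hn, hk, if_true, Nat.add_sub_cancel]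
    simpa [Nat.succ_eq_add_one, mul_comm] using Nat.add_one_mul_choose_eq n k
  rw [← mul_assoc, ← mul_assoc, hdiag]

lemma aux_pow_prod (b : ℕ → ℝ) (m : ℕ →₀ ℕ) (j : ℕ) (hj : j ∈ m.support) :
    b j * ∏ k ∈ (m - Finsupp.single j 1).support, b k ^ ((m - Finsupp.single j 1 : ℕ →₀ ℕ) k)
      = ∏ k ∈ m.support, b k ^ m k := by
  have hmj : 1 ≤ m j := Nat.one_le_iff_ne_zero.2 (Finsupp.mem_support_iff.1 hj)
  have hext : ∏ k ∈ (m - Finsupp.single j 1).support, b k ^ ((m - Finsupp.single j 1 : ℕ →₀ ℕ) k)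
      = ∏ k ∈ m.support, b k ^ ((m - Finsupp.single j 1 : ℕ →₀ ℕ) k) := by
    refine Finset.prod_subset Finsupp.support_tsub (fun k hk hk' => ?_)
    have h0 : (m - Finsupp.single j 1 : ℕ →₀ ℕ) k = 0 := by
      simpa using Finsupp.notMem_support_iff.1 hk'
    simp [h0]
  rw [hext, ← Finset.mul_prod_erase _ (fun k => b k ^ ((m - Finsupp.single j 1 : ℕ →₀ ℕ) k)) hj,
    ← Finset.mul_prod_erase _ (fun k => b k ^ m k) hj]
  have heq : ∀ k ∈ m.support.erase j,
      b k ^ ((m - Finsupp.single j 1 : ℕ →₀ ℕ) k) = b k ^ m k := by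
    intro k hk
    have hkj : k ≠ j := Finset.ne_of_mem_erase hk
    simp [Finsupp.tsub_apply, Finsupp.single_apply, (Ne.symm hkj)]
  rw [Finset.prod_congr rfl heq, ← mul_assoc]
  congr 1
  simp only [Finsupp.tsub_apply, Finsupp.single_apply, if_pos rfl]
  obtain ⟨k, hk⟩ : ∃ k, m j = k + 1 := ⟨m j - 1, by omega⟩
  rw [hk]; simp only [if_true, Nat.add_sub_cancel]
  simp [pow_succ, mul_comm]

noncomputable def Fc (b : ℕ → ℝ) (B : (ℕ →₀ ℕ) → ℝ) (ν m : ℕ →₀ ℕ) : ℝ :=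
  ((∏ k ∈ ν.support, (ν k).choose (m k)) : ℝ) *
    (Nat.factorial (m.sum fun _ n => n) : ℝ) *
    (∏ k ∈ m.support, b k ^ m k) * B (ν - m)

lemma aux_key (b : ℕ → ℝ) (B : (ℕ →₀ ℕ) → ℝ) (ν : ℕ →₀ ℕ) :
    (∑ j ∈ ν.support, (ν j : ℝ) * b j *
        ∑ m ∈ Finset.Iic (ν - Finsupp.single j 1), Fc b B (ν - Finsupp.single j 1) m) + B ν
      = ∑ m ∈ Finset.Iic ν, Fc b B ν m := by
  have step1 : ∀ j ∈ ν.support,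
      (ν j : ℝ) * b j * ∑ m ∈ Finset.Iic (ν - Finsupp.single j 1),
          Fc b B (ν - Finsupp.single j 1) m
        = ∑ m ∈ (Finset.Iic ν).filter (fun m => 1 ≤ m j),
            (ν j : ℝ) * b j * Fc b B (ν - Finsupp.single j 1) (m - Finsupp.single j 1) := by
    intro j hj
    have h1 : 1 ≤ ν j := Nat.one_le_iff_ne_zero.2 (Finsupp.mem_support_iff.1 hj)
    have hej : Finsupp.single j 1 ≤ ν := Finsupp.single_le_iff.2 h1
    rw [Finset.mul_sum]
    refine Finset.sum_nbij' (fun m => m + Finsupp.single j 1) (fun m => m - Finsupp.single j 1)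
      ?_ ?_ ?_ ?_ ?_
    · intro a ha
      rw [Finset.mem_Iic] at ha
      rw [Finset.mem_filter, Finset.mem_Iic]
      constructor
      · exact (le_tsub_iff_right hej).1 ha
      · simp [Finsupp.add_apply, Finsupp.single_apply]
    · intro a ha
      rw [Finset.mem_filter, Finset.mem_Iic] at ha
      exact Finset.mem_Iic.2 (tsub_le_tsub_right ha.1 _)
    · intro a _; exact add_tsub_cancel_right a _
    · intro a ha
      rw [Finset.mem_filter] at ha
      exact tsub_add_cancel_of_le (Finsupp.single_le_iff.2 ha.2)
    · intro a _; rw [add_tsub_cancel_right]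
  rw [Finset.sum_congr rfl step1]
  have step2 : ∑ j ∈ ν.support, ∑ m ∈ (Finset.Iic ν).filter (fun m => 1 ≤ m j),
        (ν j : ℝ) * b j * Fc b B (ν - Finsupp.single j 1) (m - Finsupp.single j 1)
      = ∑ m ∈ (Finset.Iic ν).erase 0, ∑ j ∈ m.support,
        (ν j : ℝ) * b j * Fc b B (ν - Finsupp.single j 1) (m - Finsupp.single j 1) := by
    refine Finset.sum_comm' ?_
    intro j m
    simp only [Finset.mem_filter, Finset.mem_erase, Finsupp.mem_support_iff, Finset.mem_Iic]
    constructor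
    · rintro ⟨hj, hm, h1⟩
      refine ⟨by omega, fun h => by simp [h] at h1, hm⟩
    · rintro ⟨hj, _, hm⟩
      have := hm j
      exact ⟨by omega, hm, by omega⟩
  rw [step2]
  have step3 : ∀ m ∈ (Finset.Iic ν).erase 0,
      ∑ j ∈ m.support, (ν j : ℝ) * b j *
          Fc b B (ν - Finsupp.single j 1) (m - Finsupp.single j 1)
        = Fc b B ν m := by
    intro m hm'
    rw [Finset.mem_erase, Finset.mem_Iic] at hm'
    obtain ⟨hm0, hm⟩ := hm'
    have hterm : ∀ j ∈ m.support,
        (ν j : ℝ) * b j * Fc b B (ν - Finsupp.single j 1) (m - Finsupp.single j 1)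
          = (m j : ℝ) * (((∏ k ∈ ν.support, (ν k).choose (m k)) : ℝ) *
              (Nat.factorial ((m.sum fun _ n => n) - 1) : ℝ) *
              (∏ k ∈ m.support, b k ^ m k) * B (ν - m)) := by
      intro j hj
      have hmj : 1 ≤ m j := Nat.one_le_iff_ne_zero.2 (Finsupp.mem_support_iff.1 hj)
      have hej : Finsupp.single j 1 ≤ m := Finsupp.single_le_iff.2 hmj
      have hBeq : ν - Finsupp.single j 1 - (m - Finsupp.single j 1) = ν - m :=
        tsub_tsub_tsub_cancel_right hej
      have hsum : ((m - Finsupp.single j 1).sum fun _ n => n) = (m.sum fun _ n => n) - 1 := by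
        have := aux_sum_sub m j hmj; omega
      have hch : (ν j : ℝ) * ((∏ k ∈ (ν - Finsupp.single j 1).support,
            ((ν - Finsupp.single j 1 : ℕ →₀ ℕ) k).choose
              ((m - Finsupp.single j 1 : ℕ →₀ ℕ) k)) : ℝ)
          = (m j : ℝ) * ((∏ k ∈ ν.support, (ν k).choose (m k)) : ℝ) := by
        exact_mod_cast congrArg (fun n : ℕ => (n : ℝ)) (aux_choose_prod ν m hm j hj)
      have hpw := aux_pow_prod b m j hj
      unfold Fc
      rw [hBeq, hsum]
      calc (ν j : ℝ) * b j * (((∏ k ∈ (ν - Finsupp.single j 1).support,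
              ((ν - Finsupp.single j 1 : ℕ →₀ ℕ) k).choose
                ((m - Finsupp.single j 1 : ℕ →₀ ℕ) k)) : ℝ) *
            (Nat.factorial ((m.sum fun _ n => n) - 1) : ℝ) *
            (∏ k ∈ (m - Finsupp.single j 1).support,
              b k ^ ((m - Finsupp.single j 1 : ℕ →₀ ℕ) k)) * B (ν - m))
          = ((ν j : ℝ) * ((∏ k ∈ (ν - Finsupp.single j 1).support,
              ((ν - Finsupp.single j 1 : ℕ →₀ ℕ) k).choose
                ((m - Finsupp.single j 1 : ℕ →₀ ℕ) k)) : ℝ)) *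
            (Nat.factorial ((m.sum fun _ n => n) - 1) : ℝ) *
            (b j * ∏ k ∈ (m - Finsupp.single j 1).support,
              b k ^ ((m - Finsupp.single j 1 : ℕ →₀ ℕ) k)) * B (ν - m) := by ring
        _ = ((m j : ℝ) * ((∏ k ∈ ν.support, (ν k).choose (m k)) : ℝ)) *
            (Nat.factorial ((m.sum fun _ n => n) - 1) : ℝ) *
            (∏ k ∈ m.support, b k ^ m k) * B (ν - m) := by rw [hch, hpw]
        _ = _ := by ring
    rw [Finset.sum_congr rfl hterm, ← Finset.sum_mul]
    have hsumcast : (∑ j ∈ m.support, (m j : ℝ)) = ((m.sum fun _ n => n : ℕ) : ℝ) := by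
      rw [Finsupp.sum]; push_cast; rfl
    rw [hsumcast]
    have hfac : ((m.sum fun _ n => n : ℕ) : ℝ) *
        (Nat.factorial ((m.sum fun _ n => n) - 1) : ℝ)
        = (Nat.factorial (m.sum fun _ n => n) : ℝ) := by
      exact_mod_cast congrArg (fun n : ℕ => (n : ℝ))
        (Nat.mul_factorial_pred (aux_sum_pos m hm0).ne')
    unfold Fc
    calc ((m.sum fun _ n => n : ℕ) : ℝ) * (((∏ k ∈ ν.support, (ν k).choose (m k)) : ℝ) *
          (Nat.factorial ((m.sum fun _ n => n) - 1) : ℝ) *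
          (∏ k ∈ m.support, b k ^ m k) * B (ν - m))
        = ((∏ k ∈ ν.support, (ν k).choose (m k)) : ℝ) *
          (((m.sum fun _ n => n : ℕ) : ℝ) *
            (Nat.factorial ((m.sum fun _ n => n) - 1) : ℝ)) *
          (∏ k ∈ m.support, b k ^ m k) * B (ν - m) := by ring
      _ = _ := by rw [hfac]
  rw [Finset.sum_congr rfl step3]
  have hF0 : Fc b B ν 0 = B ν := by
    simp [Fc]
  rw [← hF0]
  exact Finset.sum_erase_add _ _ (Finset.mem_Iic.2 (zero_le : (0 : ℕ →₀ ℕ) ≤ ν))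



/-- Recursive estimate (Lemma `recur1`): if non-negative numbers `𝔸_ν`, `𝔹_ν` indexed by
finitely supported multi-indices satisfy
`𝔸_ν ≤ ∑_{j ∈ supp(ν)} ν_j b_j 𝔸_{ν − e_j} + 𝔹_ν` for every `ν`, then
`𝔸_ν ≤ ∑_{m ≤ ν} C(ν,m) |m|! b^m 𝔹_{ν − m}` for all `ν`. -/
theorem recursive_estimate_one
    (b : ℕ → ℝ) (hb : ∀ j, 0 ≤ b j)
    (A B : (ℕ →₀ ℕ) → ℝ)
    (hA : ∀ ν, 0 ≤ A ν) (hB : ∀ ν, 0 ≤ B ν)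
    (hrec : ∀ ν : ℕ →₀ ℕ,
      A ν ≤ (∑ j ∈ ν.support, (ν j : ℝ) * b j * A (ν - Finsupp.single j 1)) + B ν) :
    ∀ ν : ℕ →₀ ℕ,
      A ν ≤ ∑ m ∈ Finset.Iic ν,
        ((∏ j ∈ ν.support, (ν j).choose (m j)) : ℝ) *
          (Nat.factorial (m.sum fun _ n => n) : ℝ) *
          (∏ j ∈ m.support, b j ^ m j) * B (ν - m) := by
  suffices H : ∀ n (ν : ℕ →₀ ℕ), (ν.sum fun _ k => k) ≤ n →
      A ν ≤ ∑ m ∈ Finset.Iic ν, Fc b B ν m by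
    intro ν; exact H _ ν le_rfl
  intro n
  induction n with
  | zero =>
    intro ν hν
    have hsupp : ν.support = ∅ := by
      by_contra h
      obtain ⟨j, hj⟩ := Finset.nonempty_iff_ne_empty.2 h
      have h1 : 1 ≤ ν j := Nat.one_le_iff_ne_zero.2 (Finsupp.mem_support_iff.1 hj)
      have := aux_sum_sub ν j h1
      omega
    refine (hrec ν).trans ?_
    rw [← aux_key b B ν, hsupp]
    simp
  | succ n ih =>
    intro ν hν
    refine (hrec ν).trans ?_
    rw [← aux_key b B ν]
    refine add_le_add (Finset.sum_le_sum fun j hj => ?_) le_rfl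
    have h1 : 1 ≤ ν j := Nat.one_le_iff_ne_zero.2 (Finsupp.mem_support_iff.1 hj)
    have hs : ((ν - Finsupp.single j 1).sum fun _ k => k) ≤ n := by
      have := aux_sum_sub ν j h1; omega
    exact mul_le_mul_of_nonneg_left (ih _ hs) (mul_nonneg (Nat.cast_nonneg _) (hb j))
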